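/- Fix A > 0 and α ∈ [0,1), θ₀ ∈ ℝ, and define Φ₁(x) = e^{iθ₀} (2√π A^{3/2} α/(1+α²)) · ((A² − ((1−α²)/(1+α²))(8πx)²) + 2iA√((1−α²)/(1+α²))(8πx)) / (A² + ((1−α²)/(1+α²))(8πx)²)². Then the total charge integral (1/4π)∫_{S²} (⋆F + iF), which equals 2∫_{−A/8π}^{A/8π} Φ₁(x) dx (in the coordinates where the area form is 2 dφ dx), evaluates to e^{iθ₀} α √(A/(4π)). -/

import Mathlib

open Complex Real intervalIntegral

set_option maxHeartbeats 1000000 in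
theorem stmt14 (A α θ₀ : ℝ) (hA : 0 < A) (hα : α ∈ Set.Ico (0 : ℝ) 1) :
    let k : ℝ := (1 - α ^ 2) / (1 + α ^ 2)
    let Φ₁ : ℝ → ℂ := fun x =>
      Complex.exp (Complex.I * (θ₀ : ℂ)) *
        ((2 * Real.sqrt Real.pi * (A * Real.sqrt A) * α / (1 + α ^ 2) : ℝ) : ℂ) *
        (((A ^ 2 - k * (8 * Real.pi * x) ^ 2 : ℝ) : ℂ)
          + 2 * Complex.I * ((A * Real.sqrt k * (8 * Real.pi * x) : ℝ) : ℂ)) /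
        (((A ^ 2 + k * (8 * Real.pi * x) ^ 2 : ℝ) : ℂ)) ^ 2
    (2 : ℂ) * (∫ x in (-(A / (8 * Real.pi)))..(A / (8 * Real.pi)), Φ₁ x) =
      Complex.exp (Complex.I * (θ₀ : ℂ)) * (α : ℂ)
        * ((Real.sqrt (A / (4 * Real.pi)) : ℝ) : ℂ) := by
  intro k Φ₁
  obtain ⟨hα0, hα1⟩ := hα
  have hα2 : (0:ℝ) < 1 + α ^ 2 := by positivity
  have hk : 0 < k := div_pos (by nlinarith) hα2
  have hπ := Real.pi_pos
  set s := Real.sqrt k with hs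
  have hs2 : s ^ 2 = k := Real.sq_sqrt hk.le
  have hspos : 0 < s := Real.sqrt_pos.2 hk
  set E := Complex.exp (Complex.I * (θ₀:ℂ)) with hE
  set c0 : ℝ := 2 * Real.sqrt Real.pi * (A * Real.sqrt A) * α / (1 + α ^ 2) with hc0
  set g : ℝ → ℂ := fun x => (A:ℂ) - Complex.I * (s:ℂ) * (8 * (Real.pi:ℂ)) * (x:ℂ) with hg
  have hgne : ∀ x : ℝ, g x ≠ 0 := by
    intro x h
    have h1 : (g x).re = 0 := by rw [h]; simp
    simp [hg, Complex.sub_re, Complex.mul_re, Complex.mul_im] at h1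
    exact hA.ne' h1
  have hs2c : ((s:ℂ)) ^ 2 = ((k:ℝ):ℂ) := by exact_mod_cast congrArg Complex.ofReal hs2
  set ψ : ℝ → ℂ := fun x => (c0:ℂ) * ((g x) ^ 2)⁻¹ with hψ
  have expand : ∀ (E c N D G : ℂ), D ≠ 0 → G ≠ 0 → N * G ^ 2 = D ^ 2 →
      E * c * N / D ^ 2 = E * (c * (G ^ 2) ⁻¹) := by
    intro E c N D G hD hG h
    have hN : N ≠ 0 := by
      intro h0
      rw [h0, zero_mul] at h
      exact pow_ne_zero 2 hD h.symm
    field_simp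
    linear_combination E * c * h
  have hkey : ∀ x : ℝ, Φ₁ x = E * ψ x := by
    intro x
    simp only [Φ₁, hψ, ← hE, ← hc0]
    apply expand
    · have : (0:ℝ) < A ^ 2 + k * (8 * Real.pi * x) ^ 2 := by positivity
      exact_mod_cast this.ne'
    · exact hgne x
    · simp only [hg]
      rw [← hs]
      push_cast
      rw [← hs2c]
      linear_combination (((s:ℂ)*(8*(Real.pi:ℂ)*(x:ℂ)))^2 *
        (2*Complex.I*(A:ℂ)*((s:ℂ)*(8*(Real.pi:ℂ)*(x:ℂ))) - 3*(A:ℂ)^2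
          - ((s:ℂ)*(8*(Real.pi:ℂ)*(x:ℂ)))^2)) * Complex.I_sq
  have hgd : ∀ x : ℝ, HasDerivAt g (-(Complex.I * (s:ℂ) * (8 * (Real.pi:ℂ)))) x := by
    intro x
    have h1 : HasDerivAt (fun x : ℝ => (x:ℂ)) 1 x := by
      simpa using (hasDerivAt_id x).ofReal_comp
    have h2 := (h1.const_mul (Complex.I * (s:ℂ) * (8 * (Real.pi:ℂ)))).const_sub (A:ℂ)
    simpa using h2
  set F : ℝ → ℂ := fun x => (c0:ℂ) * ((Complex.I * (s:ℂ) * (8 * (Real.pi:ℂ)))⁻¹ * (g x)⁻¹)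
    with hF
  have hsne : (s:ℂ) ≠ 0 := by exact_mod_cast hspos.ne'
  have hπne : ((Real.pi:ℝ):ℂ) ≠ 0 := by exact_mod_cast hπ.ne'
  have hFd : ∀ x : ℝ, HasDerivAt F (ψ x) x := by
    intro x
    have hinv : HasDerivAt (fun y : ℝ => (g y)⁻¹)
        ((-(Complex.I * (s:ℂ) * (8 * (Real.pi:ℂ)))) • (-((g x) ^ 2)⁻¹)) x :=
      (hasDerivAt_inv (hgne x)).scomp x (hgd x)
    have h1 := hinv.const_mul ((c0:ℂ) * (Complex.I * (s:ℂ) * (8 * (Real.pi:ℂ)))⁻¹)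
    have h2 : HasDerivAt F
        ((c0:ℂ) * (Complex.I * (s:ℂ) * (8 * (Real.pi:ℂ)))⁻¹ *
          ((-(Complex.I * (s:ℂ) * (8 * (Real.pi:ℂ)))) • (-((g x) ^ 2)⁻¹))) x := by
      convert h1 using 2
      · rfl
      · simp [hF, mul_assoc]
    convert h2 using 1
    simp only [hψ, smul_eq_mul]
    have hg2 : (g x) ^ 2 ≠ 0 := pow_ne_zero 2 (hgne x)
    field_simp
  have hcont : Continuous ψ := by
    apply Continuous.mul continuous_const
    apply Continuous.inv₀
    · exact ((continuous_const.sub (continuous_const.mul Complex.continuous_ofReal)).pow 2)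
    · exact fun x => pow_ne_zero 2 (hgne x)
  have hint : (∫ x in (-(A / (8 * Real.pi)))..(A / (8 * Real.pi)), Φ₁ x)
      = E * (F (A / (8 * Real.pi)) - F (-(A / (8 * Real.pi)))) := by
    calc (∫ x in (-(A / (8 * Real.pi)))..(A / (8 * Real.pi)), Φ₁ x)
        = ∫ x in (-(A / (8 * Real.pi)))..(A / (8 * Real.pi)), E * ψ x := by
          simp_rw [hkey]
      _ = E * ∫ x in (-(A / (8 * Real.pi)))..(A / (8 * Real.pi)), ψ x := by
          rw [intervalIntegral.integral_const_mul]
      _ = E * (F (A / (8 * Real.pi)) - F (-(A / (8 * Real.pi)))) := by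
          rw [intervalIntegral.integral_eq_sub_of_hasDerivAt (fun x _ => hFd x)
            (hcont.intervalIntegrable _ _)]
  rw [hint]
  have hgc : g (A / (8 * Real.pi)) = (A:ℂ) * (1 - Complex.I * (s:ℂ)) := by
    simp only [hg]
    push_cast
    field_simp
  have hgc' : g (-(A / (8 * Real.pi))) = (A:ℂ) * (1 + Complex.I * (s:ℂ)) := by
    simp only [hg]
    push_cast
    field_simp
    ring
  have hAne : ((A:ℝ):ℂ) ≠ 0 := by exact_mod_cast hA.ne'
  have h1m : (1 - Complex.I * (s:ℂ)) ≠ 0 := by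
    intro h
    have := congrArg Complex.re h
    simp [Complex.mul_re] at this
  have h1p : (1 + Complex.I * (s:ℂ)) ≠ 0 := by
    intro h
    have := congrArg Complex.re h
    simp [Complex.mul_re] at this
  have hsqrt4π : Real.sqrt (A / (4 * Real.pi)) = Real.sqrt A / (2 * Real.sqrt Real.pi) := by
    rw [show (4 * Real.pi) = (2 * Real.sqrt Real.pi) ^ 2 by
      rw [mul_pow, Real.sq_sqrt hπ.le]; norm_num]
    rw [Real.sqrt_div hA.le, Real.sqrt_sq (by positivity)]
  have hπs : Real.sqrt Real.pi ^ 2 = Real.pi := Real.sq_sqrt hπ.le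
  have hπsne : Real.sqrt Real.pi ≠ 0 := by positivity
  have hreal : c0 / (2 * Real.pi * A * (1 + s ^ 2)) = α * Real.sqrt (A / (4 * Real.pi)) := by
    rw [hsqrt4π, hc0, hs2]
    have hkk : 1 + k = 2 / (1 + α ^ 2) := by
      show 1 + (1 - α ^ 2) / (1 + α ^ 2) = 2 / (1 + α ^ 2)
      field_simp
      norm_num
    rw [hkk]
    field_simp
    ring_nf
    linear_combination α * hπs
  simp only [hF]
  rw [hgc, hgc']
  rw [show Complex.exp (Complex.I * (θ₀:ℂ)) * (α:ℂ) * ((Real.sqrt (A / (4*Real.pi)):ℝ):ℂ)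
      = E * (((α * Real.sqrt (A / (4 * Real.pi)) : ℝ)):ℂ) by push_cast; rw [hE]; ring]
  rw [← hreal]
  have hs2' : ((1:ℂ) + (s:ℂ) ^ 2) ≠ 0 := by
    have : (0:ℝ) < 1 + s ^ 2 := by positivity
    exact_mod_cast this.ne'
  have hdiff : ((1:ℂ) - Complex.I * (s:ℂ))⁻¹ - ((1:ℂ) + Complex.I * (s:ℂ))⁻¹
      = 2 * Complex.I * (s:ℂ) / (1 + (s:ℂ) ^ 2) := by
    rw [inv_sub_inv h1m h1p]
    congr 1
    · ring
    · linear_combination (-(s:ℂ) ^ 2) * Complex.I_sq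
  have key : ((c0:ℂ) * ((Complex.I * (s:ℂ) * (8 * (Real.pi:ℂ)))⁻¹ * ((A:ℂ) * (1 - Complex.I * (s:ℂ)))⁻¹)
        - (c0:ℂ) * ((Complex.I * (s:ℂ) * (8 * (Real.pi:ℂ)))⁻¹ * ((A:ℂ) * (1 + Complex.I * (s:ℂ)))⁻¹))
      = (c0:ℂ) * (Complex.I * (s:ℂ) * (8 * (Real.pi:ℂ)))⁻¹ * ((A:ℂ))⁻¹ *
        (((1:ℂ) - Complex.I * (s:ℂ))⁻¹ - ((1:ℂ) + Complex.I * (s:ℂ))⁻¹) := by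
    simp only [mul_inv]
    ring
  rw [key, hdiff]
  push_cast
  field_simp
  ring
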